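/- Let (Ω, μ) be a probability space, let Z : Ω → ℝ be an integrable random variable such that Z and -Z are identically distributed, and let B be an independent uniform random variable on {0, 1} (formally, work on the product of (Ω, μ) with the uniform measure on {0,1}). Fix s ∈ ℝ and define the random variable W by: W = s + 1 + 2Z on the event {Z > 0} ∪ ({Z = 0} ∩ {B = 1}), and W = s + 4 + 4Z on the event {Z < 0} ∪ ({Z = 0} ∩ {B = 0}). Then E[W] = s + 5/2 - E[|Z|]. -/

import Mathlib

open MeasureTheory

/-- Drift identity (equation (9.1)) at the heart of the attack on the AMS sketch
(Theorem 9.1): if `Z` is an integrable symmetric random variable on a probability space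
`(Ω, μ)`, `B` is an independent fair coin (formally, we work on the product of `(Ω, μ)` with
the uniform measure on `{0,1}`, modeled as `Bool`), and
`W = s + 1 + 2Z` on the event `{Z > 0} ∪ ({Z = 0} ∩ {B = 1})` while `W = s + 4 + 4Z` on the
complementary event `{Z < 0} ∪ ({Z = 0} ∩ {B = 0})`, then `E[W] = s + 5/2 - E[|Z|]`. -/
theorem stmt_17 {Ω : Type*} [MeasurableSpace Ω] (μ : Measure Ω) [IsProbabilityMeasure μ]
    (Z : Ω → ℝ) (hZm : Measurable Z) (hZint : Integrable Z μ)
    (hsym : Measure.map Z μ = Measure.map (fun ω => -Z ω) μ)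
    (s : ℝ) (W : Ω × Bool → ℝ)
    (hW : ∀ ω b, W (ω, b) =
      if 0 < Z ω ∨ (Z ω = 0 ∧ b = true) then s + 1 + 2 * Z ω else s + 4 + 4 * Z ω) :
    ∫ x, W x ∂(μ.prod (PMF.uniformOfFintype Bool).toMeasure) =
      s + 5 / 2 - ∫ ω, |Z ω| ∂μ := by
  set ν := (PMF.uniformOfFintype Bool).toMeasure with hν
  haveI hνprob : IsProbabilityMeasure ν := PMF.toMeasure.isProbabilityMeasure _
  have hWfun : W = fun p : Ω × Bool =>
      if 0 < Z p.1 ∨ (Z p.1 = 0 ∧ p.2 = true) then s + 1 + 2 * Z p.1 else s + 4 + 4 * Z p.1 := by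
    funext p; obtain ⟨ω, b⟩ := p; exact hW ω b
  set h : ℝ → ℝ := fun x => if 0 < x then 2 * x - 3 / 2 else if x < 0 then 4 * x + 3 / 2 else 0
    with hh
  have hhm : Measurable h := by
    apply Measurable.ite measurableSet_Ioi (by fun_prop)
    exact Measurable.ite measurableSet_Iio (by fun_prop) (by fun_prop)
  have habs : ∀ x : ℝ, |h x| ≤ 3 / 2 + 4 * |x| := by
    intro x
    rcases lt_trichotomy x 0 with hx | hx | hx
    · rw [hh]; dsimp only
      rw [if_neg (by linarith), if_pos hx, abs_of_neg hx, abs_le]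
      constructor <;> linarith
    · simp [hh, hx]; norm_num
    · rw [hh]; dsimp only
      rw [if_pos hx, abs_of_pos hx, abs_le]
      constructor <;> linarith
  have hint : ∀ f : Ω → ℝ, Measurable f → Integrable f μ → Integrable (fun ω => h (f ω)) μ := by
    intro f hfm hfi
    apply Integrable.mono' ((integrable_const (3 / 2 : ℝ)).add (hfi.abs.const_mul 4))
      (hhm.comp hfm).aestronglyMeasurable
    filter_upwards with ω
    simpa using habs (f ω)
  have hintZ := hint Z hZm hZint
  have hintnZ := hint (fun ω => -Z ω) hZm.neg hZint.neg
  have hsymm : ∫ ω, h (Z ω) ∂μ = ∫ ω, h (-Z ω) ∂μ := by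
    rw [← integral_map hZm.aemeasurable hhm.aestronglyMeasurable, hsym,
      integral_map (show Measurable fun ω => -Z ω from hZm.neg).aemeasurable hhm.aestronglyMeasurable]
  have hsum : ∀ x : ℝ, h x + h (-x) = -(2 * |x|) := by
    intro x
    rcases lt_trichotomy x 0 with hx | hx | hx
    · rw [hh]; dsimp only
      rw [if_neg (by linarith), if_pos hx, if_pos (by linarith : (0:ℝ) < -x), abs_of_neg hx]
      ring
    · simp [hh, hx]
    · rw [hh]; dsimp only
      rw [if_pos hx, if_neg (by linarith), if_pos (by linarith : -x < 0), abs_of_pos hx]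
      ring
  have hkey : ∫ ω, h (Z ω) ∂μ = -∫ ω, |Z ω| ∂μ := by
    have h2 : (2 : ℝ) * ∫ ω, h (Z ω) ∂μ = ∫ ω, (h (Z ω) + h (-Z ω)) ∂μ := by
      rw [integral_add hintZ hintnZ, ← hsymm]; ring
    have h3 : ∫ ω, (h (Z ω) + h (-Z ω)) ∂μ = -(2 * ∫ ω, |Z ω| ∂μ) := by
      calc ∫ ω, (h (Z ω) + h (-Z ω)) ∂μ = ∫ ω, -(2 * |Z ω|) ∂μ := by
            congr 1; funext ω; exact hsum (Z ω)
        _ = -(2 * ∫ ω, |Z ω| ∂μ) := by rw [integral_neg, integral_const_mul]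
    linarith [h2, h3]
  have hWm : Measurable W := by
    rw [hWfun]
    apply Measurable.ite
    · refine MeasurableSet.union ?_ (MeasurableSet.inter ?_ ?_)
      · exact measurableSet_lt measurable_const (hZm.comp measurable_fst)
      · exact (hZm.comp measurable_fst) (measurableSet_singleton 0)
      · exact measurable_snd (measurableSet_singleton true)
    · fun_prop
    · fun_prop
  have hZabsprod : Integrable (fun p : Ω × Bool => |Z p.1|) (μ.prod ν) := by
    have hmap : Measure.map Prod.fst (μ.prod ν) = μ := by
      rw [Measure.map_fst_prod, measure_univ, one_smul]
    have h1 : Integrable (fun ω => |Z ω|) (Measure.map Prod.fst (μ.prod ν)) := by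
      rw [hmap]; exact hZint.abs
    have h2 : AEStronglyMeasurable (fun ω => |Z ω|) (Measure.map Prod.fst (μ.prod ν)) := by
      rw [hmap]; exact hZint.abs.aestronglyMeasurable
    have := (integrable_map_measure h2 measurable_fst.aemeasurable).mp h1
    exact this
  have hWint : Integrable W (μ.prod ν) := by
    apply Integrable.mono' ((integrable_const (|s| + 4 : ℝ)).add (hZabsprod.const_mul 4))
      hWm.aestronglyMeasurable
    filter_upwards with p
    rw [hWfun]
    dsimp only
    simp only [Real.norm_eq_abs]
    split
    · calc |s + 1 + 2 * Z p.1| ≤ |s + 1| + |2 * Z p.1| := abs_add_le _ _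
        _ ≤ (|s| + |(1:ℝ)|) + |2| * |Z p.1| := by
            rw [abs_mul]; exact add_le_add_left (abs_add_le _ _) _
        _ ≤ |s| + 4 + 4 * |Z p.1| := by
            have := abs_nonneg (Z p.1); norm_num; linarith
    · calc |s + 4 + 4 * Z p.1| ≤ |s + 4| + |4 * Z p.1| := abs_add_le _ _
        _ ≤ (|s| + |(4:ℝ)|) + |4| * |Z p.1| := by
            rw [abs_mul]; exact add_le_add_left (abs_add_le _ _) _
        _ ≤ |s| + 4 + 4 * |Z p.1| := by
            have := abs_nonneg (Z p.1); norm_num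
  rw [integral_prod W hWint]
  have hinner : ∀ ω, ∫ b, W (ω, b) ∂ν = s + 5 / 2 + h (Z ω) := by
    intro ω
    rw [integral_fintype (Integrable.of_finite)]
    have h12 : ∀ b : Bool, (ν {b}).toReal = 1 / 2 := by
      intro b
      rw [hν, PMF.toMeasure_apply_singleton _ _ (measurableSet_singleton b)]
      simp [PMF.uniformOfFintype_apply]
    simp only [Fintype.sum_bool, Measure.real, h12, smul_eq_mul]
    rcases lt_trichotomy (Z ω) 0 with hx | hx | hx
    · have hc : ∀ b : Bool, ¬(0 < Z ω ∨ (Z ω = 0 ∧ b = true)) := by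
        intro b; push_neg; exact ⟨hx.le, fun h' => absurd h' hx.ne⟩
      rw [hW ω true, hW ω false, if_neg (hc true), if_neg (hc false), hh]
      dsimp only
      rw [if_neg (not_lt.2 hx.le), if_pos hx]
      ring
    · rw [hW ω true, hW ω false, if_pos (Or.inr ⟨hx, rfl⟩), if_neg (by simp [hx]), hh]
      dsimp only
      rw [if_neg (by simp [hx]), if_neg (by simp [hx]), hx]
      ring
    · rw [hW ω true, hW ω false, if_pos (Or.inl hx), if_pos (Or.inl hx), hh]
      dsimp only
      rw [if_pos hx]
      ring
  rw [show (fun ω => ∫ b, W (ω, b) ∂ν) = fun ω => s + 5 / 2 + h (Z ω) from funext hinner]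
  rw [integral_add (integrable_const _) hintZ, hkey, integral_const]
  simp
  ring
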